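/- For each integer r ≥ 2, the monoid M_r = ℤ₊(1,…,1) + Σ_{j=1}^r ℤ₊(r·e_j) ⊆ ℤ₊^r is simplicial (the cone it generates is ℝ₊^r, which is spanned by r linearly independent vectors) and is not a free commutative monoid (not isomorphic to ℤ₊^r). -/

import Mathlib

open scoped NNReal
noncomputable section

/-- Real image of an integer vector. -/
def toR {r : ℕ} (v : Fin r → ℤ) : Fin r → ℝ := fun i => (v i : ℝ)

/-- The group of differences of a submonoid of an abelian group. -/
def gp {G : Type*} [AddCommGroup G] (M : AddSubmonoid G) : AddSubgroup G :=
  AddSubgroup.closure (M : Set G)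

/-- `M` is normal: `c • x ∈ M` for `x ∈ gp M`, `c ≥ 1` implies `x ∈ M`. -/
def IsNormalMonoid {G : Type*} [AddCommGroup G] (M : AddSubmonoid G) : Prop :=
  ∀ (c : ℕ) (x : G), 0 < c → x ∈ gp M → (c : ℤ) • x ∈ M → x ∈ M

/-- `M` is positive: no nontrivial units. -/
def IsPositiveMonoid {G : Type*} [AddCommGroup G] (M : AddSubmonoid G) : Prop :=
  ∀ x ∈ M, -x ∈ M → x = 0

/-- The cone `ℝ₊M ⊆ ℝ^r` spanned by a submonoid `M ⊆ ℤ^r`. -/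
def coneM {r : ℕ} (M : AddSubmonoid (Fin r → ℤ)) : Set (Fin r → ℝ) :=
  (Submodule.span ℝ≥0 (toR '' (M : Set (Fin r → ℤ))) : Submodule ℝ≥0 (Fin r → ℝ))

/-- The distinguished vector `e = (1,0) ∈ ℤ ⊕ ℤ^r`. -/
def eVec (r : ℕ) : ℤ × (Fin r → ℤ) := (1, 0)

/-- `M_i = (ℝ ⊕ ℝ₊M) ∩ (ℤ(x₁ - ie) + ⋯ + ℤ(x_r - ie))`, with `x_j - ie = (-i, x_j)`. -/
def Mi {r : ℕ} (M : AddSubmonoid (Fin r → ℤ)) (x : Fin r → (Fin r → ℤ)) (i : ℕ) :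
    Set (ℤ × (Fin r → ℤ)) :=
  {p | p ∈ AddSubgroup.closure (Set.range fun j => ((-(i : ℤ), x j) : ℤ × (Fin r → ℤ))) ∧
       toR p.2 ∈ coneM M}

/-- The submonoid (as a set) `ℤ₊e + M_i`. -/
def ZeMi {r : ℕ} (M : AddSubmonoid (Fin r → ℤ)) (x : Fin r → (Fin r → ℤ)) (i : ℕ) :
    Set (ℤ × (Fin r → ℤ)) :=
  {p | ∃ (z : ℕ) (m : ℤ × (Fin r → ℤ)), m ∈ Mi M x i ∧ p = (z : ℤ) • eVec r + m}

/-- The monoid `M_r = ℤ₊(1,…,1) + Σ_j ℤ₊(r·e_j) ⊆ ℤ₊^r`. -/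
def Mr (r : ℕ) : AddSubmonoid (Fin r → ℤ) :=
  AddSubmonoid.closure
    ({fun _ => 1} ∪ Set.range fun j : Fin r => (r : ℤ) • Pi.single j (1 : ℤ))






/-- Riesz refinement property. -/
def HasRiesz (M : Type*) [AddCommMonoid M] : Prop :=
  ∀ x y z w : M, x + y = z + w →
    ∃ a b c d : M, x = a + b ∧ y = c + d ∧ z = a + c ∧ w = b + d

lemma hasRiesz_of_equiv {M N : Type*} [AddCommMonoid M] [AddCommMonoid N]
    (e : M ≃+ N) (h : HasRiesz N) : HasRiesz M := by
  intro x y z w hx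
  obtain ⟨a, b, c, d, h1, h2, h3, h4⟩ := e (x) |> fun _ =>
    h (e x) (e y) (e z) (e w) (by rw [← map_add, ← map_add, hx])
  refine ⟨e.symm a, e.symm b, e.symm c, e.symm d, ?_, ?_, ?_, ?_⟩ <;>
    [rw [← map_add, ← h1]; rw [← map_add, ← h2]; rw [← map_add, ← h3]; rw [← map_add, ← h4]] <;>
    simp

lemma hasRiesz_pi (m : ℕ) : HasRiesz (Fin m → ℕ) := by
  intro x y z w hx
  refine ⟨fun i => min (x i) (z i), fun i => x i - min (x i) (z i),
    fun i => z i - min (x i) (z i), fun i => y i - (z i - min (x i) (z i)),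
    ?_, ?_, ?_, ?_⟩ <;> funext i <;> have := congrFun hx i <;>
    simp only [Pi.add_apply] at this ⊢ <;> omega

lemma Mr_nonneg {r : ℕ} {v : Fin r → ℤ} (hv : v ∈ Mr r) : ∀ i, 0 ≤ v i := by
  have : Mr r ≤
      { carrier := {v : Fin r → ℤ | ∀ i, 0 ≤ v i}
        zero_mem' := fun i => le_refl 0
        add_mem' := fun {a b} ha hb i => add_nonneg (ha i) (hb i) } := by
    rw [Mr]
    apply AddSubmonoid.closure_le.2
    rintro v (rfl | ⟨j, rfl⟩) i
    · exact zero_le_one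
    · simp only [Pi.smul_apply, Pi.single_apply, smul_eq_mul]
      positivity
  exact this hv

lemma Mr_mod {r : ℕ} {v : Fin r → ℤ} (hv : v ∈ Mr r) (i j : Fin r) :
    (r : ℤ) ∣ v i - v j := by
  have : Mr r ≤
      { carrier := {v : Fin r → ℤ | ∀ i j, (r : ℤ) ∣ v i - v j}
        zero_mem' := fun i j => by simp
        add_mem' := fun {a b} ha hb i j => by
          have h : (a + b) i - (a + b) j = (a i - a j) + (b i - b j) := by
            simp only [Pi.add_apply]; ring
          rw [h]; exact dvd_add (ha i j) (hb i j) } := by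
    rw [Mr]
    apply AddSubmonoid.closure_le.2
    rintro v (rfl | ⟨k, rfl⟩) i j
    · simp
    · simp only [Pi.smul_apply, smul_eq_mul]
      exact dvd_sub (Dvd.intro _ rfl) (Dvd.intro _ rfl)
  exact this hv i j

lemma not_hasRiesz_Mr (r : ℕ) (hr : 2 ≤ r) : ¬ HasRiesz (Mr r) := by
  intro h
  set i0 : Fin r := ⟨0, by omega⟩ with hi0
  set i1 : Fin r := ⟨1, by omega⟩ with hi1
  have hne : i1 ≠ i0 := by simp [hi0, hi1, Fin.ext_iff]
  -- the elements
  set g : Fin r → ℤ := fun _ => 1 with hgdef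
  have hg : g ∈ Mr r := AddSubmonoid.subset_closure (Or.inl rfl)
  have hgen : ∀ j : Fin r, (r : ℤ) • Pi.single j (1 : ℤ) ∈ Mr r :=
    fun j => AddSubmonoid.subset_closure (Or.inr ⟨j, rfl⟩)
  set y : Fin r → ℤ := (r - 1) • g with hydef
  have hy : y ∈ Mr r := AddSubmonoid.nsmul_mem _ hg _
  set z : Fin r → ℤ := (r : ℤ) • Pi.single i0 1 with hzdef
  have hz : z ∈ Mr r := hgen i0
  set w : Fin r → ℤ := ∑ j ∈ Finset.univ.erase i0, (r : ℤ) • Pi.single j 1 with hwdef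
  have hw : w ∈ Mr r := AddSubmonoid.sum_mem _ (fun j _ => hgen j)
  have hwval : ∀ i : Fin r, w i = if i = i0 then 0 else (r : ℤ) := by
    intro i
    rw [hwdef]
    rw [Finset.sum_apply]
    have : ∀ j ∈ Finset.univ.erase i0,
        (((r : ℤ) • Pi.single j (1:ℤ) : Fin r → ℤ)) i = if j = i then (r : ℤ) else 0 := by
      intro j _
      simp [Pi.single_apply, eq_comm]
    rw [Finset.sum_congr rfl this, Finset.sum_ite_eq']
    by_cases hi : i = i0 <;> simp [hi]
  -- the equation in the subtype
  have heq : (⟨g, hg⟩ : Mr r) + ⟨y, hy⟩ = ⟨z, hz⟩ + ⟨w, hw⟩ := by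
    apply Subtype.ext
    show g + y = z + w
    funext i
    have hw' := hwval i
    simp only [Pi.add_apply, hydef, hzdef, Pi.smul_apply, Pi.single_apply, smul_eq_mul,
      hgdef] at *
    by_cases hi : i = i0 <;> simp [hi] at hw' ⊢ <;> omega
  obtain ⟨a, b, c, d, h1, h2, h3, h4⟩ := h _ _ _ _ heq
  have h1' : g = a.1 + b.1 := congrArg Subtype.val h1
  have h3' : z = a.1 + c.1 := congrArg Subtype.val h3
  have h4' : w = b.1 + d.1 := congrArg Subtype.val h4
  have ha := Mr_nonneg a.2
  have hb := Mr_nonneg b.2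
  have hc := Mr_nonneg c.2
  have hd := Mr_nonneg d.2
  -- a i0 ∈ {0, 1}
  have hab0 : a.1 i0 + b.1 i0 = 1 := (congrFun h1' i0).symm
  have ha1 : a.1 i1 = 0 := by
    have h5 : z i1 = a.1 i1 + c.1 i1 := congrFun h3' i1
    have hz1 : z i1 = 0 := by
      simp [hzdef, Pi.single_apply, hne]
    rw [hz1] at h5
    replace h5 := h5.symm
    have := ha i1; have := hc i1; omega
  have ha0 : a.1 i0 = 0 ∨ a.1 i0 = 1 := by have := ha i0; have := hb i0; omega
  rcases ha0 with ha0 | ha0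
  · -- then b i0 = 1, but w i0 = 0 forces d i0 = -1
    have hb0 : b.1 i0 = 1 := by omega
    have h6 : w i0 = b.1 i0 + d.1 i0 := congrFun h4' i0
    have h7 : w i0 = 0 := by rw [hwval i0]; simp
    have h8 := hd i0
    omega
  · -- then r ∣ a i0 - a i1 = 1
    have h7 := Mr_mod a.2 i0 i1
    rw [ha0, ha1] at h7
    have : (r : ℤ) ≤ 1 := Int.le_of_dvd one_pos (by simpa using h7)
    omega



/-- The nonnegative orthant as an `ℝ≥0`-submodule. -/
def orthant (r : ℕ) : Submodule ℝ≥0 (Fin r → ℝ) where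
  carrier := {y | ∀ i, 0 ≤ y i}
  zero_mem' := fun i => le_refl 0
  add_mem' := fun {a b} ha hb i => add_nonneg (ha i) (hb i)
  smul_mem' := fun c x hx i => by
    have : (c • x) i = (c : ℝ) * x i := rfl
    rw [this]
    exact mul_nonneg c.2 (hx i)

lemma orthant_le_span {r : ℕ} (S : Set (Fin r → ℝ))
    (hS : ∀ i : Fin r, (Pi.single i (1:ℝ) : Fin r → ℝ) ∈ Submodule.span ℝ≥0 S) :
    (orthant r : Set (Fin r → ℝ)) ⊆ (Submodule.span ℝ≥0 S : Set (Fin r → ℝ)) := by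
  intro y hy
  have hrep : y = ∑ i : Fin r, (y i).toNNReal • (Pi.single i (1:ℝ) : Fin r → ℝ) := by
    funext k
    rw [Finset.sum_apply]
    have : ∀ i : Fin r, ((y i).toNNReal • (Pi.single i (1:ℝ) : Fin r → ℝ)) k
        = if i = k then y i else 0 := by
      intro i
      have hs : ((y i).toNNReal • (Pi.single i (1:ℝ) : Fin r → ℝ)) k
          = ((y i).toNNReal : ℝ) * (Pi.single i (1:ℝ) : Fin r → ℝ) k := rfl
      rw [hs, Real.coe_toNNReal _ (hy i), Pi.single_apply]
      rcases eq_or_ne i k with rfl | h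
      · simp
      · simp [h, h.symm]
    rw [Finset.sum_congr rfl (fun i _ => this i), Finset.sum_ite_eq']
    simp
  rw [hrep]
  exact Submodule.sum_mem _ (fun i _ => Submodule.smul_mem _ _ (hS i))

lemma span_Mr_eq_orthant (r : ℕ) (hr : 2 ≤ r) :
    Submodule.span ℝ≥0 (toR '' ((Mr r : Set (Fin r → ℤ)))) = orthant r := by
  apply le_antisymm
  · rw [Submodule.span_le]
    rintro - ⟨v, hv, rfl⟩
    intro i
    exact_mod_cast Int.cast_nonneg (Mr_nonneg hv i)
  · intro y hy
    refine orthant_le_span _ (fun i => ?_) hy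
    have hmem : toR ((r : ℤ) • Pi.single i 1) ∈ Submodule.span ℝ≥0 (toR '' (Mr r : Set (Fin r → ℤ))) :=
      Submodule.subset_span ⟨_, AddSubmonoid.subset_closure (Or.inr ⟨i, rfl⟩), rfl⟩
    have hsm := Submodule.smul_mem _ ((r : ℝ≥0)⁻¹) hmem
    have heq : ((r : ℝ≥0)⁻¹) • toR ((r : ℤ) • Pi.single i 1) = Pi.single i (1:ℝ) := by
      funext k
      have h1 : (((r : ℝ≥0)⁻¹) • toR ((r : ℤ) • Pi.single i 1)) k
          = ((r:ℝ))⁻¹ * ((((r : ℤ) • Pi.single i (1:ℤ) : Fin r → ℤ)) k : ℝ) := by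
        simp [toR, NNReal.smul_def]
      rw [h1]
      have hr0 : (r : ℝ) ≠ 0 := by positivity
      simp only [Pi.smul_apply, Pi.single_apply, smul_eq_mul]
      by_cases h : k = i <;> simp [h, hr0]
    rwa [heq] at hsm

lemma linearIndependent_single (r : ℕ) :
    LinearIndependent ℝ (fun i : Fin r => (Pi.single i (1:ℝ) : Fin r → ℝ)) := by
  have := (Pi.basisFun ℝ (Fin r)).linearIndependent
  convert this using 1
  funext i
  rw [Pi.basisFun_apply]

lemma span_singles_eq_orthant (r : ℕ) :
    Submodule.span ℝ≥0 (Set.range fun i : Fin r => (Pi.single i (1:ℝ) : Fin r → ℝ))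
      = orthant r := by
  apply le_antisymm
  · rw [Submodule.span_le]
    rintro - ⟨i, rfl⟩ k
    simp only [Pi.single_apply]
    split <;> norm_num
  · intro y hy
    exact orthant_le_span _ (fun i => Submodule.subset_span (Set.mem_range_self i)) hy


/-- for r ≥ 2, `M_r` is simplicial (its cone is ℝ₊^r, spanned by r
linearly independent vectors) and is not a free commutative monoid. -/
theorem statement11 (r : ℕ) (hr : 2 ≤ r) :
    coneM (Mr r) = {y : Fin r → ℝ | ∀ i, 0 ≤ y i} ∧
    (∃ v : Fin r → (Fin r → ℝ), LinearIndependent ℝ v ∧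
      coneM (Mr r) = (Submodule.span ℝ≥0 (Set.range v) : Set (Fin r → ℝ))) ∧
    ∀ m : ℕ, ¬ Nonempty ((Mr r) ≃+ (Fin m → ℕ)) := by
  refine ⟨?_, ⟨fun i => Pi.single i 1, linearIndependent_single r, ?_⟩, ?_⟩
  · show (Submodule.span ℝ≥0 (toR '' ((Mr r : Set (Fin r → ℤ)))) : Set (Fin r → ℝ)) = _
    rw [span_Mr_eq_orthant r hr]; rfl
  · show (Submodule.span ℝ≥0 (toR '' ((Mr r : Set (Fin r → ℤ)))) : Set (Fin r → ℝ)) = _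
    rw [span_Mr_eq_orthant r hr, span_singles_eq_orthant r]
  · rintro m ⟨e⟩
    exact not_hasRiesz_Mr r hr (hasRiesz_of_equiv e (hasRiesz_pi m))
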